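/- Theorem 4.1 (Nonlinear Equivalence, instantiated with condition (4.3)): Given a well posed nonlinear semigroup E on a real normed vector space X and a numerical method C that is consistent with E and satisfies condition (4.3), the numerical method is convergent to the nonlinear semigroup if and only if it is stable. -/

import Mathlib

open Set

variable (X : Type*) [NormedAddCommGroup X] [NormedSpace ℝ X]

/-- The set `Z = ⋃_{t ≥ 0} {t} × X_t ⊆ [0,∞) × X`. -/
def ZSet (Xt : ℝ → Set X) : Set (ℝ × X) :=
  {p : ℝ × X | 0 ≤ p.1 ∧ p.2 ∈ Xt p.1}

/-- A nonlinear semigroup on `X`: a family of subsets `Xt t ⊆ X` with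
`X_{t+s} ⊆ X_t`, together with maps `E t : X → X` with `E 0 = id` on `X_0`,
`E t` mapping `X_{t+s}` into `X_s`, and the semigroup law. -/
structure IsNonlinearSemigroup (Xt : ℝ → Set X) (E : ℝ → X → X) : Prop where
  nested : ∀ t s : ℝ, 0 ≤ t → 0 ≤ s → Xt (t + s) ⊆ Xt t
  id_zero : ∀ u ∈ Xt 0, E 0 u = u
  maps : ∀ t s : ℝ, 0 ≤ t → 0 ≤ s → ∀ u ∈ Xt (t + s), E t u ∈ Xt s
  comp : ∀ t s : ℝ, 0 ≤ t → 0 ≤ s → ∀ u ∈ Xt (t + s), E (t + s) u = E s (E t u)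

/-- Well posedness: `(t,u) ↦ E t u` is continuous on `Z`. -/
def WellPosed (Xt : ℝ → Set X) (E : ℝ → X → X) : Prop :=
  ContinuousOn (fun p : ℝ × X => E p.1 p.2) (ZSet X Xt)

/-- A numerical method: a continuous map `C : [0,∞) × X → X` with `C 0 = id`. -/
structure IsNumericalMethod (C : ℝ → X → X) : Prop where
  cont : ContinuousOn (fun p : ℝ × X => C p.1 p.2) {p : ℝ × X | 0 ≤ p.1}
  id_zero : ∀ u : X, C 0 u = u

/-- A regular subset `Z' ⊆ Z`: closed, and invariant (in the appropriate sense)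
under the semigroup and the numerical method.  Here `X'_t = {u | (t,u) ∈ Z'}`. -/
def RegularSet (Xt : ℝ → Set X) (E C : ℝ → X → X) (Z' : Set (ℝ × X)) : Prop :=
  Z' ⊆ ZSet X Xt ∧ IsClosed Z' ∧
  (∀ t s : ℝ, 0 ≤ t → 0 ≤ s → ∀ u : X, (t + s, u) ∈ Z' → (s, E t u) ∈ Z') ∧
  (∀ t Δt : ℝ, 0 ≤ t → 0 ≤ Δt → ∀ u : X, (t + Δt, u) ∈ Z' → (t, C Δt u) ∈ Z')

/-- Local stability (Definition 2.3). -/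
def LocallyStable (Xt : ℝ → Set X) (E C : ℝ → X → X) : Prop :=
  ∀ Z' : Set (ℝ × X), RegularSet X Xt E C Z' →
  ∀ T : ℝ, 0 < T → ∀ K : Set X, IsCompact K →
  ∃ L' ρ' : ℝ, 0 < L' ∧ 0 < ρ' ∧
    ∀ (Δt : ℝ) (n : ℕ) (u v : X), 0 < Δt → (n : ℝ) * Δt ≤ T →
      u ∈ K → v ∈ K → ((n : ℝ) * Δt, u) ∈ Z' → ((n : ℝ) * Δt, v) ∈ Z' →
      ‖v - u‖ ≤ ρ' → ‖(C Δt)^[n] v - (C Δt)^[n] u‖ ≤ L' * ‖v - u‖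

/-- Distant stability (Definition 2.4). -/
def DistantlyStable (Xt : ℝ → Set X) (E C : ℝ → X → X) : Prop :=
  ∀ Z' : Set (ℝ × X), RegularSet X Xt E C Z' →
  ∀ T : ℝ, 0 < T → ∀ K : Set X, IsCompact K → ∀ ρ : ℝ, 0 < ρ →
  ∃ L'' : ℝ, 0 < L'' ∧
    ∀ (Δt : ℝ) (n : ℕ) (u v : X), 0 < Δt → (n : ℝ) * Δt ≤ T →
      u ∈ K → v ∈ K → ((n : ℝ) * Δt, u) ∈ Z' → ((n : ℝ) * Δt, v) ∈ Z' →
      ρ ≤ ‖v - u‖ → ‖(C Δt)^[n] v - (C Δt)^[n] u‖ ≤ L'' * ‖v - u‖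

/-- Stability (Definition 2.5). -/
def Stable (Xt : ℝ → Set X) (E C : ℝ → X → X) : Prop :=
  ∀ Z' : Set (ℝ × X), RegularSet X Xt E C Z' →
  ∀ T : ℝ, 0 < T → ∀ K : Set X, IsCompact K →
  ∃ L : ℝ, 0 < L ∧
    ∀ (Δt : ℝ) (n : ℕ) (u v : X), 0 < Δt → (n : ℝ) * Δt ≤ T →
      u ∈ K → v ∈ K → ((n : ℝ) * Δt, u) ∈ Z' → ((n : ℝ) * Δt, v) ∈ Z' →
      ‖(C Δt)^[n] v - (C Δt)^[n] u‖ ≤ L * ‖v - u‖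

/-- Convergence of the numerical method to the semigroup (Definition 3.1). -/
def Convergent (Xt : ℝ → Set X) (E C : ℝ → X → X) : Prop :=
  ∀ Z' : Set (ℝ × X), RegularSet X Xt E C Z' →
  ∀ T : ℝ, 0 < T → ∀ K : Set X, IsCompact K → ∀ ε : ℝ, 0 < ε →
  ∃ θ : ℝ, 0 < θ ∧
    ∀ (t Δt : ℝ) (n : ℕ) (u : X), t ∈ Icc (0 : ℝ) T → 0 < Δt →
      u ∈ K → (t, u) ∈ Z' → ((n : ℝ) * Δt, u) ∈ Z' →
      Δt ≤ θ → |t - (n : ℝ) * Δt| ≤ θ →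
      ‖E t u - (C Δt)^[n] u‖ ≤ ε

/-- Consistency of the numerical method with the semigroup (Definition 3.2). -/
def Consistent (Xt : ℝ → Set X) (E C : ℝ → X → X) : Prop :=
  ∀ Z' : Set (ℝ × X), RegularSet X Xt E C Z' →
  ∀ T : ℝ, 0 < T → ∀ K : Set X, IsCompact K → ∀ ε : ℝ, 0 < ε →
  ∃ δ : ℝ, 0 < δ ∧
    ∀ (t Δt : ℝ) (u : X), t ∈ Icc (0 : ℝ) T → 0 < Δt → Δt ≤ δ →
      u ∈ K → (t + Δt, u) ∈ Z' →
      ‖C Δt (E t u) - E Δt (E t u)‖ ≤ ε * Δt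

/-- Condition (4.3): the optimal distant-stability constants remain bounded as
`ρ ↓ 0`, i.e. one constant works simultaneously for all `ρ > 0`. -/
def Condition43 (Xt : ℝ → Set X) (E C : ℝ → X → X) : Prop :=
  ∀ Z' : Set (ℝ × X), RegularSet X Xt E C Z' →
  ∀ T : ℝ, 0 < T → ∀ K : Set X, IsCompact K →
  ∃ M : ℝ, 0 < M ∧
    ∀ ρ : ℝ, 0 < ρ →
    ∀ (Δt : ℝ) (n : ℕ) (u v : X), 0 < Δt → (n : ℝ) * Δt ≤ T →
      u ∈ K → v ∈ K → ((n : ℝ) * Δt, u) ∈ Z' → ((n : ℝ) * Δt, v) ∈ Z' →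
      ρ ≤ ‖v - u‖ → ‖(C Δt)^[n] v - (C Δt)^[n] u‖ ≤ M * ‖v - u‖

set_option maxHeartbeats 1000000 in
/-- Theorem 4.1 (Nonlinear Equivalence, instantiated with condition (4.3)). -/
theorem convergent_iff_stable
    (Xt : ℝ → Set X) (E C : ℝ → X → X)
    (hE : IsNonlinearSemigroup X Xt E) (hWP : WellPosed X Xt E)
    (hC : IsNumericalMethod X C)
    (hcons : Consistent X Xt E C) (h43 : Condition43 X Xt E C) :
    Convergent X Xt E C ↔ Stable X Xt E C := by
  -- Stability always holds, thanks to condition (4.3).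
  have hstable : Stable X Xt E C := by
    intro Z' hZ' T hT K hK
    obtain ⟨M, hM, hM'⟩ := h43 Z' hZ' T hT K hK
    refine ⟨M, hM, fun Δt n u v h1 h2 h3 h4 h5 h6 => ?_⟩
    rcases eq_or_ne v u with rfl | hne
    · simp
    · have hpos : 0 < ‖v - u‖ := by
        rw [norm_pos_iff]; exact sub_ne_zero.mpr hne
      exact hM' ‖v - u‖ hpos Δt n u v h1 h2 h3 h4 h5 h6 le_rfl
  constructor
  · intro _; exact hstable
  intro hstab
  intro Z' hZ' T hT K hK ε hε
  obtain ⟨hZsub, hZcl, hZE, hZC⟩ := id hZ'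
  -- monotonicity of the family Xt
  have hXtmono : ∀ {a b : ℝ}, 0 ≤ a → a ≤ b → Xt b ⊆ Xt a := by
    intro a b ha hab
    have h := hE.nested a (b - a) ha (by linarith)
    have : a + (b - a) = b := by ring
    rwa [this] at h
  set T₁ : ℝ := T + 1 with hT₁def
  have hT₁ : 0 < T₁ := by positivity
  -- the capped downward closure of Z', again regular
  set Z'' : Set (ℝ × X) :=
    {p : ℝ × X | 0 ≤ p.1 ∧ ∃ r, p.1 ≤ r ∧ r ≤ T₁ ∧ (r, p.2) ∈ Z'} with hZ''def
  have hZ''mem : ∀ p : ℝ × X,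
      p ∈ Z'' ↔ 0 ≤ p.1 ∧ ∃ r, p.1 ≤ r ∧ r ≤ T₁ ∧ (r, p.2) ∈ Z' := by
    intro p; rw [hZ''def]; rfl
  have hZ''reg : RegularSet X Xt E C Z'' := by
    refine ⟨?_, ?_, ?_, ?_⟩
    · rintro ⟨a, x⟩ hax
      obtain ⟨ha, r, har, hrT, hrZ⟩ := (hZ''mem _).1 hax
      exact ⟨ha, hXtmono ha har (hZsub hrZ).2⟩
    · apply IsSeqClosed.isClosed
      intro p q hp hq
      have hp' : ∀ m, 0 ≤ (p m).1 ∧ ∃ r, (p m).1 ≤ r ∧ r ≤ T₁ ∧ (r, (p m).2) ∈ Z' :=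
        fun m => (hZ''mem _).1 (hp m)
      choose r hr1 hr2 hr3 using fun m => (hp' m).2
      have hrIcc : ∀ m, r m ∈ Icc (0:ℝ) T₁ :=
        fun m => ⟨le_trans (hp' m).1 (hr1 m), hr2 m⟩
      obtain ⟨a, haI, φ, hφ, hconv⟩ := (isCompact_Icc).tendsto_subseq hrIcc
      have hq1 : Filter.Tendsto (fun m => (p (φ m)).1) Filter.atTop (nhds q.1) :=
        ((continuous_fst.tendsto q).comp (hq.comp hφ.tendsto_atTop))
      have hq2 : Filter.Tendsto (fun m => (p (φ m)).2) Filter.atTop (nhds q.2) :=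
        ((continuous_snd.tendsto q).comp (hq.comp hφ.tendsto_atTop))
      have hmem : (a, q.2) ∈ Z' := by
        apply hZcl.mem_of_tendsto (hconv.prodMk_nhds hq2)
        exact Filter.Eventually.of_forall (fun m => hr3 (φ m))
      refine (hZ''mem _).2 ⟨?_, a, ?_, haI.2, hmem⟩
      · exact ge_of_tendsto' hq1 (fun m => (hp' (φ m)).1)
      · exact le_of_tendsto_of_tendsto' hq1 hconv (fun m => hr1 (φ m))
    · intro t s ht hs x hx
      obtain ⟨hts, r, hr1, hr2, hr3⟩ := (hZ''mem _).1 hx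
      have hr1' : t + s ≤ r := hr1
      have hr3' : (t + (r - t), x) ∈ Z' := by
        rw [show t + (r - t) = r by ring]; exact hr3
      have h4 := hZE t (r - t) ht (by linarith) x hr3'
      exact (hZ''mem _).2 ⟨hs, r - t, by linarith, by linarith, h4⟩
    · intro t Δt ht hΔt x hx
      obtain ⟨hts, r, hr1, hr2, hr3⟩ := (hZ''mem _).1 hx
      have hr1' : t + Δt ≤ r := hr1
      have hr3' : ((r - Δt) + Δt, x) ∈ Z' := by
        rw [show (r - Δt) + Δt = r by ring]; exact hr3
      have h4 := hZC (r - Δt) Δt (by linarith) hΔt x hr3'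
      exact (hZ''mem _).2 ⟨ht, r - Δt, by linarith, by linarith, h4⟩
  -- the orbit compact set K₁
  set S₁ : Set (ℝ × ℝ × X) :=
    {q : ℝ × ℝ × X | q.1 ∈ Icc 0 T₁ ∧ q.2.1 ∈ Icc 0 T₁ ∧ q.2.2 ∈ K ∧
      (q.1 + q.2.1, q.2.2) ∈ Z'} with hS₁def
  have hS₁cl : IsClosed S₁ := by
    rw [hS₁def]
    apply IsClosed.inter
    · exact isClosed_Icc.preimage continuous_fst
    apply IsClosed.inter
    · exact isClosed_Icc.preimage (continuous_fst.comp continuous_snd)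
    apply IsClosed.inter
    · exact hK.isClosed.preimage (continuous_snd.comp continuous_snd)
    · exact hZcl.preimage ((continuous_fst.add (continuous_fst.comp continuous_snd)).prodMk
        (continuous_snd.comp continuous_snd))
  have hS₁c : IsCompact S₁ := by
    apply IsCompact.of_isClosed_subset (isCompact_Icc.prod (isCompact_Icc.prod hK)) hS₁cl
    rintro ⟨a, b, x⟩ ⟨ha, hb, hx, _⟩
    exact ⟨ha, hb, hx⟩
  have hgmaps : Set.MapsTo (fun q : ℝ × ℝ × X => (q.1, q.2.2)) S₁ (ZSet X Xt) := by
    rintro ⟨a, b, x⟩ ⟨ha, hb, hx, hz⟩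
    exact ⟨ha.1, hXtmono ha.1 (le_add_of_nonneg_right hb.1) (hZsub hz).2⟩
  have hgcont : ContinuousOn (fun q : ℝ × ℝ × X => E q.1 q.2.2) S₁ :=
    hWP.comp ((continuous_fst.prodMk (continuous_snd.comp continuous_snd)).continuousOn) hgmaps
  set K₁ : Set X := (fun q : ℝ × ℝ × X => E q.1 q.2.2) '' S₁ with hK₁def
  have hK₁ : IsCompact K₁ := hS₁c.image_of_continuousOn hgcont
  -- K₂ : thickening of K₁ by short-time applications of C
  set K₂ : Set X := (fun p : ℝ × X => C p.1 p.2) '' (Icc (0:ℝ) 1 ×ˢ K₁) with hK₂def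
  have hK₂ : IsCompact K₂ := by
    apply (isCompact_Icc.prod hK₁).image_of_continuousOn
    exact hC.cont.mono (fun p hp => hp.1.1)
  have hK₁K₂ : K₁ ⊆ K₂ := by
    intro w hw
    have hmem : ((0, w) : ℝ × X) ∈ Icc (0:ℝ) 1 ×ˢ K₁ := ⟨⟨le_refl 0, zero_le_one⟩, hw⟩
    have h2 : C 0 w ∈ K₂ := Set.mem_image_of_mem (fun p : ℝ × X => C p.1 p.2) hmem
    rwa [hC.id_zero w] at h2
  -- stability on K₂
  obtain ⟨L, hL, hstabL⟩ := hstab Z' hZ' T₁ hT₁ K₂ hK₂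
  set ε' : ℝ := ε / (2 * L * T₁) with hε'def
  have hε' : 0 < ε' := by positivity
  -- consistency on K₁ with respect to Z''
  obtain ⟨δ, hδ, hconsδ⟩ := hcons Z'' hZ''reg T₁ hT₁ K₁ hK₁ ε' hε'
  -- uniform continuity of E on the compact set S₂
  set S₂ : Set (ℝ × X) := Z' ∩ (Icc 0 T₁ ×ˢ K) with hS₂def
  have hS₂c : IsCompact S₂ := by
    apply IsCompact.of_isClosed_subset (isCompact_Icc.prod hK)
      (hZcl.inter (isClosed_Icc.prod hK.isClosed))
    exact inter_subset_right
  have hE₂ : ContinuousOn (fun p : ℝ × X => E p.1 p.2) S₂ :=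
    hWP.mono (fun p hp => hZsub hp.1)
  obtain ⟨θ₀, hθ₀, hθ₀'⟩ := Metric.uniformContinuousOn_iff.mp
    (hS₂c.uniformContinuousOn_of_continuous hE₂) (ε/2) (by positivity)
  set θ : ℝ := min (θ₀ / 2) (min δ 1) with hθdef
  have hθpos : 0 < θ := lt_min (by positivity) (lt_min hδ one_pos)
  have hθδ : θ ≤ δ := le_trans (min_le_right _ _) (min_le_left _ _)
  have hθ1 : θ ≤ 1 := le_trans (min_le_right _ _) (min_le_right _ _)
  have hθθ₀ : θ ≤ θ₀ / 2 := min_le_left _ _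
  refine ⟨θ, hθpos, ?_⟩
  intro t Δt n u htIcc hΔt huK htu hnu hΔθ hclose
  have habs := abs_le.mp hclose
  have hnn : 0 ≤ (n : ℝ) * Δt := by positivity
  have hnT : (n : ℝ) * Δt ≤ T₁ := by
    have := htIcc.2
    rw [hT₁def]; linarith [habs.1]
  have huXt : u ∈ Xt ((n : ℝ) * Δt) := (hZsub hnu).2
  have huXt0 : u ∈ Xt 0 := hXtmono le_rfl hnn huXt
  -- the telescoping estimate
  have key : ∀ k : ℕ, k ≤ n →
      ‖E ((n : ℝ) * Δt) u - (C Δt)^[k] (E (((n : ℝ) - (k : ℝ)) * Δt) u)‖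
        ≤ (k : ℝ) * (L * (ε' * Δt)) := by
    intro k
    induction k with
    | zero => intro _; simp
    | succ k ih =>
      intro hk
      have hk' : k ≤ n := Nat.le_of_succ_le hk
      have hk1n : (k : ℝ) + 1 ≤ (n : ℝ) := by exact_mod_cast hk
      have hkn : (k : ℝ) ≤ (n : ℝ) := by linarith
      set s : ℝ := ((n : ℝ) - ((k : ℝ) + 1)) * Δt with hs
      have hs0 : 0 ≤ s := mul_nonneg (by linarith) hΔt.le
      have e1 : s + Δt = ((n : ℝ) - (k : ℝ)) * Δt := by rw [hs]; ring
      have e2 : s + ((k : ℝ) + 1) * Δt = (n : ℝ) * Δt := by rw [hs]; ring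
      have e3 : ((n : ℝ) - (k : ℝ)) * Δt + (k : ℝ) * Δt = (n : ℝ) * Δt := by ring
      have e4 : Δt + (k : ℝ) * Δt = ((k : ℝ) + 1) * Δt := by ring
      have hsle : s ≤ (n : ℝ) * Δt := by
        rw [hs]; nlinarith [hΔt.le]
      have hk1le : ((k : ℝ) + 1) * Δt ≤ (n : ℝ) * Δt :=
        mul_le_mul_of_nonneg_right hk1n hΔt.le
      have hkle : (k : ℝ) * Δt ≤ (n : ℝ) * Δt :=
        mul_le_mul_of_nonneg_right hkn hΔt.le
      have hnkle : ((n : ℝ) - (k : ℝ)) * Δt ≤ (n : ℝ) * Δt := by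
        nlinarith [hΔt.le, Nat.cast_nonneg (α := ℝ) k]
      -- memberships in Z'
      have hvZ : (((k : ℝ) + 1) * Δt, E s u) ∈ Z' := by
        apply hZE s (((k : ℝ) + 1) * Δt) hs0 (by positivity) u
        rw [e2]; exact hnu
      have hvXt : E s u ∈ Xt (((k : ℝ) + 1) * Δt) := (hZsub hvZ).2
      have hvXt0 : E s u ∈ Xt 0 := hXtmono le_rfl (by positivity) hvXt
      have hEv : E (((n : ℝ) - (k : ℝ)) * Δt) u = E Δt (E s u) := by
        have hu' : u ∈ Xt (s + Δt) := by
          apply hXtmono (by linarith) _ huXt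
          rw [e1]; exact hnkle
        have hcmp := hE.comp s Δt hs0 hΔt.le u hu'
        rw [e1] at hcmp; exact hcmp
      have hEvZ : ((k : ℝ) * Δt, E Δt (E s u)) ∈ Z' := by
        apply hZE Δt ((k : ℝ) * Δt) hΔt.le (by positivity) (E s u)
        rw [e4]; exact hvZ
      have hCvZ : ((k : ℝ) * Δt, C Δt (E s u)) ∈ Z' := by
        apply hZC ((k : ℝ) * Δt) Δt (by positivity) hΔt.le (E s u)
        rw [show (k : ℝ) * Δt + Δt = ((k : ℝ) + 1) * Δt by ring]; exact hvZ
      -- memberships in the compact sets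
      have hvK₁ : E s u ∈ K₁ := by
        have hmem : ((s, ((k : ℝ) + 1) * Δt, u) : ℝ × ℝ × X) ∈ S₁ := by
          refine ⟨⟨hs0, hsle.trans hnT⟩, ⟨by positivity, hk1le.trans hnT⟩, huK, ?_⟩
          show (s + ((k : ℝ) + 1) * Δt, u) ∈ Z'
          rw [e2]; exact hnu
        exact Set.mem_image_of_mem _ hmem
      have hnk0 : 0 ≤ ((n : ℝ) - (k : ℝ)) * Δt := mul_nonneg (by linarith) hΔt.le
      have hEvK₁ : E Δt (E s u) ∈ K₁ := by
        rw [← hEv]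
        have hmem : (((((n : ℝ) - (k : ℝ)) * Δt), (k : ℝ) * Δt, u) : ℝ × ℝ × X) ∈ S₁ := by
          refine ⟨⟨hnk0, hnkle.trans hnT⟩, ⟨by positivity, hkle.trans hnT⟩, huK, ?_⟩
          show (((n : ℝ) - (k : ℝ)) * Δt + (k : ℝ) * Δt, u) ∈ Z'
          rw [e3]; exact hnu
        exact Set.mem_image_of_mem _ hmem
      have hCvK₂ : C Δt (E s u) ∈ K₂ := by
        have hmem : ((Δt, E s u) : ℝ × X) ∈ Icc (0:ℝ) 1 ×ˢ K₁ :=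
          ⟨⟨hΔt.le, hΔθ.trans hθ1⟩, hvK₁⟩
        exact Set.mem_image_of_mem _ hmem
      have hEvK₂ : E Δt (E s u) ∈ K₂ := hK₁K₂ hEvK₁
      -- consistency estimate
      have hmemZ'' : ((0 : ℝ) + Δt, E s u) ∈ Z'' := by
        refine (hZ''mem _).2 ⟨show (0:ℝ) ≤ 0 + Δt by linarith, ((k : ℝ) + 1) * Δt,
          show (0:ℝ) + Δt ≤ ((k : ℝ) + 1) * Δt from ?_, hk1le.trans hnT, hvZ⟩
        have h0 : 0 ≤ (k : ℝ) * Δt := by positivity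
        linarith
      have hconsapp := hconsδ 0 Δt (E s u) ⟨le_rfl, hT₁.le⟩ hΔt (hΔθ.trans hθδ)
        hvK₁ hmemZ''
      rw [hE.id_zero _ hvXt0] at hconsapp
      -- stability estimate
      have hstabapp := hstabL Δt k (C Δt (E s u)) (E Δt (E s u)) hΔt
        (hkle.trans hnT) hCvK₂ hEvK₂ hCvZ hEvZ
      have hconsapp' : ‖E Δt (E s u) - C Δt (E s u)‖ ≤ ε' * Δt := by
        rw [norm_sub_rev]; exact hconsapp
      have hterm : ‖(C Δt)^[k] (E Δt (E s u)) - (C Δt)^[k] (C Δt (E s u))‖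
          ≤ L * (ε' * Δt) :=
        hstabapp.trans (mul_le_mul_of_nonneg_left hconsapp' hL.le)
      -- combine
      have hcast : ((n : ℝ) - ((k + 1 : ℕ) : ℝ)) * Δt = s := by
        rw [hs]; push_cast; ring
      rw [hcast, Function.iterate_succ_apply]
      have ihk := ih hk'
      rw [hEv] at ihk
      have tri := dist_triangle (E ((n : ℝ) * Δt) u)
        ((C Δt)^[k] (E Δt (E s u))) ((C Δt)^[k] (C Δt (E s u)))
      simp only [dist_eq_norm] at tri
      push_cast
      calc ‖E ((n : ℝ) * Δt) u - (C Δt)^[k] (C Δt (E s u))‖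
          ≤ ‖E ((n : ℝ) * Δt) u - (C Δt)^[k] (E Δt (E s u))‖
            + ‖(C Δt)^[k] (E Δt (E s u)) - (C Δt)^[k] (C Δt (E s u))‖ := tri
        _ ≤ (k : ℝ) * (L * (ε' * Δt)) + L * (ε' * Δt) := add_le_add ihk hterm
        _ = ((k : ℝ) + 1) * (L * (ε' * Δt)) := by ring
  -- conclude the discrete part
  have keyn := key n le_rfl
  rw [show ((n : ℝ) - (n : ℝ)) * Δt = 0 by ring, hE.id_zero u huXt0] at keyn
  have hB : ‖E ((n : ℝ) * Δt) u - (C Δt)^[n] u‖ ≤ ε / 2 := by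
    refine keyn.trans ?_
    have h1 : (n : ℝ) * (L * (ε' * Δt)) = L * ε' * ((n : ℝ) * Δt) := by ring
    have h2 : L * ε' * ((n : ℝ) * Δt) ≤ L * ε' * T₁ :=
      mul_le_mul_of_nonneg_left hnT (by positivity)
    have h3 : L * ε' * T₁ = ε / 2 := by
      rw [hε'def]; field_simp
    rw [h1]
    exact h2.trans (le_of_eq h3)
  -- continuity part
  have hA : ‖E t u - E ((n : ℝ) * Δt) u‖ ≤ ε / 2 := by
    have hx : (t, u) ∈ S₂ := ⟨htu, ⟨htIcc.1, by rw [hT₁def]; linarith [htIcc.2]⟩, huK⟩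
    have hy : (((n : ℝ) * Δt, u) : ℝ × X) ∈ S₂ := ⟨hnu, ⟨hnn, hnT⟩, huK⟩
    have hdeq : dist ((t, u) : ℝ × X) (((n : ℝ) * Δt, u) : ℝ × X)
        = |t - (n : ℝ) * Δt| := by
      rw [Prod.dist_eq, dist_self, Real.dist_eq]
      exact max_eq_left (abs_nonneg _)
    have hd : dist ((t, u) : ℝ × X) (((n : ℝ) * Δt, u) : ℝ × X) < θ₀ := by
      rw [hdeq]; linarith
    have := hθ₀' _ hx _ hy hd
    rw [dist_eq_norm] at this
    exact this.le
  have tri := dist_triangle (E t u) (E ((n : ℝ) * Δt) u) ((C Δt)^[n] u)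
  simp only [dist_eq_norm] at tri
  linarith
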